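/- For M ∈ ℚ₊ and a fraction g/h in lowest terms (0 ≤ g < h, gcd(g,h) = 1), let g' be the inverse of g modulo h. Then the matrices α = [[M, g/h],[0,1]] and β = [[1, 0],[g'/h, 1/(M·h²)]] determine the same coset in PSL₂(ℤ)\PGL₂⁺(ℚ): there exists γ ∈ SL₂(ℤ) and λ ∈ ℚ₊ with α = λ·γ·β. -/

import Mathlib

/-- Equivalence of the standard form `M, g/h` and the reverse standard form
`(1/(h²M), g'/h)`: if `g' · g ≡ 1 (mod h)`, then the matrices
`α = [[M, g/h],[0,1]]` and `β = [[1,0],[g'/h, 1/(Mh²)]]` determine the same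
coset in `PSL₂(ℤ)\PGL₂⁺(ℚ)`, i.e. `α = λ·γ·β` for some `γ ∈ SL₂(ℤ)` and
`λ ∈ ℚ₊`. -/
theorem standard_form_eq_reverse_standard_form (M : ℚ) (hM : 0 < M)
    (g h g' : ℕ) (hh : 0 < h) (hg : g < h) (hgh : Nat.gcd g h = 1)
    (hg' : g * g' ≡ 1 [MOD h]) :
    ∃ γ : Matrix (Fin 2) (Fin 2) ℤ, γ.det = 1 ∧ ∃ lam : ℚ, 0 < lam ∧
      !![M, (g : ℚ) / h; 0, 1] =
        lam • (γ.map (Int.cast : ℤ → ℚ) *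
          !![1, 0; (g' : ℚ) / h, 1 / (M * (h : ℚ) ^ 2)]) := by
  have hdvd : (h : ℤ) ∣ (g : ℤ) * g' - 1 := by
    have h1 := hg'.dvd
    have : ((g:ℤ)*g' - 1) = -((1:ℤ) - g*g') := by ring
    rw [this]
    exact dvd_neg.mpr (by exact_mod_cast h1)
  obtain ⟨k, hk⟩ := hdvd
  refine ⟨!![-k, g; -(g' : ℤ), h], ?_, M * h, by positivity, ?_⟩
  · rw [Matrix.det_fin_two_of]
    nlinarith [hk]
  · have h0 : (h : ℚ) ≠ 0 := by positivity
    have hM0 : M ≠ 0 := ne_of_gt hM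
    have hk' : (h : ℚ) * k = (g : ℚ) * g' - 1 := by exact_mod_cast hk.symm
    ext i j
    fin_cases i <;> fin_cases j <;>
      simp [Matrix.mul_apply, Fin.sum_univ_two, Matrix.map_apply] <;>
      field_simp <;> ring_nf <;> first | simp | nlinarith [hk']
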